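/- arXiv:2105.13974 — 2 statements merged into one kernel-verified Lean document; each statement's English description precedes it below -/
import Mathlib

section
/- With the setup of the subdivision graph $\tilde G$ of a finite connected graph $G$: for every $k\in\mathbb N$ and all $x,y\in V(G)$, $(\Pi\,\tilde Q^{2k})(x,y)=\pi_G(y)$, where $\tilde Q$ is the simple random walk transition matrix on $\tilde G$, $\Pi$ is the orthogonal projection onto $\mathrm{span}(\boldsymbol 1, w)$ in $\ell^2(\tilde\pi)$, and $\pi_G$ is the stationary distribution of the random walk on $G$. -/
open SimpleGraph Finset

/-- The edge-subdivision graph of a simple graph. -/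
def subdivisionGraph {V : Type*} (G : SimpleGraph V) :
    SimpleGraph (V ⊕ G.edgeSet) where
  Adj a b :=
    match a, b with
    | Sum.inl x, Sum.inr e => x ∈ (e : Sym2 V)
    | Sum.inr e, Sum.inl x => x ∈ (e : Sym2 V)
    | _, _ => False
  symm := ⟨by rintro (x | e) (y | f) h <;> simp_all⟩
  loopless := ⟨by rintro (x | e) h <;> simp_all⟩

set_option maxHeartbeats 1000000 in
open scoped Classical in
/-- For the subdivision graph `G̃` of a finite connected graph `G`:
for every `k ∈ ℕ` and all `x, y ∈ V(G)`, `(Π Q̃^{2k})(x,y) = π_G(y)`, where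
`Q̃` is the simple random walk transition matrix on `G̃`, `Π` is the orthogonal
projection onto `span(𝟏, w)` in `ℓ²(π̃)`, and `π_G` is the stationary
distribution of the random walk on `G`. -/
theorem proj_mul_pow_eq_stationary {V : Type*} [Fintype V] [DecidableEq V]
    (G : SimpleGraph V) [DecidableRel G.Adj] (hG : G.Connected) [Nontrivial V]
    (tildeπ : V ⊕ G.edgeSet → ℝ)
    (hπ : ∀ a, tildeπ a = Sum.elim (fun x => (G.degree x : ℝ)) (fun _ => 2) a)
    (w : V ⊕ G.edgeSet → ℝ)
    (hw : ∀ a, w a = Sum.elim (fun _ => (1 : ℝ)) (fun _ => -1) a)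
    (tQ : Matrix (V ⊕ G.edgeSet) (V ⊕ G.edgeSet) ℝ)
    (htQ : ∀ a b, tQ a b = if (subdivisionGraph G).Adj a b then 1 / tildeπ a else 0)
    (Pr : Matrix (V ⊕ G.edgeSet) (V ⊕ G.edgeSet) ℝ)
    -- `Π` is idempotent, self-adjoint in `ℓ²(π̃)`, with range `span(𝟏, w)`
    (hPr2 : Pr * Pr = Pr)
    (hPrsa : ∀ a b, tildeπ a * Pr a b = tildeπ b * Pr b a)
    (hrange : LinearMap.range Pr.mulVecLin
      = Submodule.span ℝ {(fun _ => (1 : ℝ)), w}) :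
    ∀ (k : ℕ) (x y : V),
      (Pr * tQ ^ (2 * k)) (Sum.inl x) (Sum.inl y)
        = (G.degree y : ℝ) / (2 * G.edgeFinset.card) := by
  classical
  -- degrees are positive
  have hdeg : ∀ x : V, 0 < G.degree x := by
    intro x
    obtain ⟨y, hy⟩ := exists_ne x
    obtain ⟨p⟩ := hG.preconnected x y
    exact G.degree_pos_iff_exists_adj x |>.mpr
      ⟨p.getVert 1, p.adj_snd (SimpleGraph.Walk.not_nil_of_ne hy.symm)⟩
  have hπpos : ∀ a, 0 < tildeπ a := by
    rintro (x | e) <;> rw [hπ] <;> simp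
    exact_mod_cast hdeg x
  -- there is an edge
  have hadj : ∃ u v, G.Adj u v := by
    obtain ⟨x, y, hxy⟩ := exists_pair_ne V
    obtain ⟨p⟩ := hG.preconnected x y
    exact ⟨x, p.getVert 1, p.adj_snd (SimpleGraph.Walk.not_nil_of_ne hxy)⟩
  obtain ⟨u0, v0, huv0⟩ := hadj
  set m : ℝ := (G.edgeFinset.card : ℝ) with hm_def
  have hm : 0 < m := by
    have : (0:ℕ) < G.edgeFinset.card :=
      Finset.card_pos.mpr ⟨s(u0, v0), SimpleGraph.mem_edgeFinset.mpr huv0⟩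
    rw [hm_def]; exact_mod_cast this
  have hcardE : (Fintype.card G.edgeSet : ℝ) = m := by
    rw [hm_def]
    norm_cast
    exact (Set.toFinset_card _).symm
  -- w values
  have hwl : ∀ x : V, w (Sum.inl x) = 1 := fun x => by rw [hw]; rfl
  have hwr : ∀ e : G.edgeSet, w (Sum.inr e) = -1 := fun e => by rw [hw]; rfl
  have hww : ∀ a, w a * w a = 1 := by rintro (x | e) <;> simp [hwl, hwr]
  -- π sums
  have S1 : ∑ a, tildeπ a = 4 * m := by
    rw [Fintype.sum_sum_type]
    have h1 : ∑ x : V, tildeπ (Sum.inl x) = 2 * m := by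
      simp only [hπ, Sum.elim_inl]
      rw [hm_def]
      norm_cast
      exact G.sum_degrees_eq_twice_card_edges
    have h2 : ∑ _e : G.edgeSet, (2:ℝ) = 2 * m := by
      rw [Finset.sum_const, Finset.card_univ, nsmul_eq_mul, mul_comm, ← hcardE]
    rw [h1]
    simp only [hπ, Sum.elim_inr]
    rw [h2]; ring
  have S2 : ∑ a, tildeπ a * w a = 0 := by
    rw [Fintype.sum_sum_type]
    have h1 : ∑ x : V, tildeπ (Sum.inl x) * w (Sum.inl x) = 2 * m := by
      simp only [hwl, mul_one, hπ, Sum.elim_inl]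
      rw [hm_def]; norm_cast
      exact G.sum_degrees_eq_twice_card_edges
    have h2 : ∑ e : G.edgeSet, tildeπ (Sum.inr e) * w (Sum.inr e) = -(2 * m) := by
      simp only [hwr, hπ, Sum.elim_inr, mul_neg, mul_one, Finset.sum_neg_distrib,
        Finset.sum_const, Finset.card_univ, nsmul_eq_mul]
      rw [mul_comm, ← hcardE]
      try ring
    rw [h1, h2]; ring
  -- entries of tQ
  have hQ1 : ∀ x z : V, tQ (Sum.inl x) (Sum.inl z) = 0 := by
    intro x z; rw [htQ]; simp [subdivisionGraph]
  have hQ4 : ∀ e f : G.edgeSet, tQ (Sum.inr e) (Sum.inr f) = 0 := by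
    intro e f; rw [htQ]; simp [subdivisionGraph]
  have hQ2 : ∀ (x : V) (e : G.edgeSet),
      tQ (Sum.inl x) (Sum.inr e) = if x ∈ (e : Sym2 V) then 1 / (G.degree x : ℝ) else 0 := by
    intro x e; rw [htQ, hπ]
    simp [subdivisionGraph]
  have hQ3 : ∀ (e : G.edgeSet) (x : V),
      tQ (Sum.inr e) (Sum.inl x) = if x ∈ (e : Sym2 V) then 1 / 2 else 0 := by
    intro e x; rw [htQ, hπ]
    simp [subdivisionGraph]
  -- reversibility
  have hrev : ∀ b c, tildeπ b * tQ b c = tildeπ c * tQ c b := by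
    have key : ∀ (x : V) (e : G.edgeSet),
        tildeπ (Sum.inl x) * tQ (Sum.inl x) (Sum.inr e)
          = tildeπ (Sum.inr e) * tQ (Sum.inr e) (Sum.inl x) := by
      intro x e
      rw [hQ2, hQ3, hπ, hπ]
      simp only [Sum.elim_inl, Sum.elim_inr]
      by_cases hx : x ∈ (e : Sym2 V) <;> simp [hx]
      have : (G.degree x : ℝ) ≠ 0 := by exact_mod_cast (hdeg x).ne'
      field_simp
    rintro (x | e) (z | f)
    · rw [hQ1, hQ1]; ring
    · exact key x f
    · exact (key z e).symm
    · rw [hQ4, hQ4]; ring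
  -- counting: incident edges
  have hsumL : ∀ (x : V) (r : ℝ),
      ∑ e : G.edgeSet, (if x ∈ (e : Sym2 V) then r else 0) = (G.degree x : ℝ) * r := by
    intro x r
    rw [← Finset.sum_filter]
    rw [Finset.sum_const, nsmul_eq_mul]
    congr 1
    rw [← Fintype.card_subtype]
    rw [← G.card_incidenceSet_eq_degree (v := x)]
    norm_cast
    apply Fintype.card_congr
    exact Equiv.subtypeSubtypeEquivSubtypeInter (· ∈ G.edgeSet) (x ∈ ·)
  have hsumR : ∀ (u v : V), u ≠ v → ∀ r : ℝ,
      (∑ z : V, if z ∈ s(u, v) then r else 0) = 2 * r := by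
    intro u v huv r
    rw [← Finset.sum_filter]
    have hfil : Finset.univ.filter (fun z => z ∈ s(u, v)) = {u, v} := by
      ext z; simp [Sym2.mem_iff]
    rw [hfil, Finset.sum_const, Finset.card_pair huv, nsmul_eq_mul]
    norm_num
  -- the key row-sum identity
  have D : ∀ (s : ℝ) (c), ∑ b, tQ c b * (1 + s * w b) = 1 - s * w c := by
    intro s c
    rcases c with x | e
    · rw [Fintype.sum_sum_type]
      have h1 : ∑ z : V, tQ (Sum.inl x) (Sum.inl z) * (1 + s * w (Sum.inl z)) = 0 := by
        simp [hQ1]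
      have h2 : ∑ e : G.edgeSet, tQ (Sum.inl x) (Sum.inr e) * (1 + s * w (Sum.inr e))
          = 1 - s := by
        simp only [hQ2, hwr, ite_mul, zero_mul]
        have : ∀ e : G.edgeSet,
            (if x ∈ (e : Sym2 V) then 1 / (G.degree x : ℝ) * (1 + s * -1) else 0)
            = (if x ∈ (e : Sym2 V) then 1 / (G.degree x : ℝ) * (1 - s) else 0) := by
          intro e; congr 1; ring
        rw [Finset.sum_congr rfl (fun e _ => this e), hsumL]
        have hdx : (G.degree x : ℝ) ≠ 0 := by
          have := hdeg x; positivity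
        field_simp
      rw [h1, h2, hwl]; ring
    · obtain ⟨e, he⟩ := e
      induction e using Sym2.ind with
      | _ u v =>
        have huv : u ≠ v := (G.mem_edgeSet.mp he).ne
        rw [Fintype.sum_sum_type]
        have h1 : ∑ z : V, tQ (Sum.inr ⟨s(u,v), he⟩) (Sum.inl z) * (1 + s * w (Sum.inl z))
            = 1 + s := by
          simp only [hQ3, hwl, ite_mul, zero_mul, mul_one]
          rw [hsumR u v huv]
          ring
        have h2 : ∑ f : G.edgeSet,
            tQ (Sum.inr ⟨s(u,v), he⟩) (Sum.inr f) * (1 + s * w (Sum.inr f)) = 0 := by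
          simp [hQ4]
        rw [h1, h2, hwr]; ring
  -- columns of Pr lie in span(1, w)
  have hcol : ∀ b, ∃ α β : ℝ, ∀ a, Pr a b = α + β * w a := by
    intro b
    have hmem : (fun a => Pr a b) ∈ LinearMap.range Pr.mulVecLin := by
      refine ⟨Pi.single b 1, ?_⟩
      rw [Matrix.mulVecLin_apply, Matrix.mulVec_single]
      funext a; simp
    rw [hrange] at hmem
    obtain ⟨α, β, hαβ⟩ := Submodule.mem_span_pair.mp hmem
    refine ⟨α, β, fun a => ?_⟩
    have := congrFun hαβ a
    simp only [Pi.add_apply, Pi.smul_apply, smul_eq_mul, mul_one] at this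
    linarith [this]
  choose α β hαβ using hcol
  -- Pr fixes 1 and w
  have hfix : ∀ u : V ⊕ G.edgeSet → ℝ, u ∈ Submodule.span ℝ {(fun _ => (1:ℝ)), w} →
      Pr.mulVec u = u := by
    intro u hu
    rw [← hrange] at hu
    obtain ⟨v, hv⟩ := hu
    rw [Matrix.mulVecLin_apply] at hv
    rw [← hv, Matrix.mulVec_mulVec, hPr2]
  have hrow1 : ∀ a, ∑ b, Pr a b = 1 := by
    intro a
    have h1 := hfix (fun _ => 1) (Submodule.subset_span (Set.mem_insert _ _))
    have := congrFun h1 a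
    simpa [Matrix.mulVec, dotProduct] using this
  have hroww : ∀ a, ∑ b, Pr a b * w b = w a := by
    intro a
    have h1 := hfix w (Submodule.subset_span (Set.mem_insert_of_mem _ rfl))
    have := congrFun h1 a
    simpa [Matrix.mulVec, dotProduct] using this
  -- sums of α and β
  have e0 : G.edgeSet := ⟨s(u0, v0), G.mem_edgeSet.mpr huv0⟩
  have hSα : ∑ b, α b = 1 ∧ ∑ b, β b = 0 := by
    have h1 : ∑ b, α b + ∑ b, β b = 1 := by
      have := hrow1 (Sum.inl u0)
      rw [Finset.sum_congr rfl (fun b _ => hαβ b (Sum.inl u0))] at this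
      rw [Finset.sum_add_distrib] at this
      simpa [hwl] using this
    have h2 : ∑ b, α b - ∑ b, β b = 1 := by
      have := hrow1 (Sum.inr e0)
      rw [Finset.sum_congr rfl (fun b _ => hαβ b (Sum.inr e0))] at this
      rw [Finset.sum_add_distrib] at this
      simp only [hwr, mul_neg, mul_one, Finset.sum_neg_distrib] at this
      linarith
    constructor <;> linarith
  have hSw : ∑ b, α b * w b = 0 ∧ ∑ b, β b * w b = 1 := by
    have h1 : ∑ b, α b * w b + ∑ b, β b * w b = 1 := by
      have h := hroww (Sum.inl u0)
      have h2 : ∑ b, Pr (Sum.inl u0) b * w b = ∑ b, (α b * w b + β b * w b) :=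
        Finset.sum_congr rfl (fun b _ => by rw [hαβ b (Sum.inl u0), hwl]; ring)
      rw [h2, Finset.sum_add_distrib, hwl] at h
      exact h
    have h2 : ∑ b, α b * w b - ∑ b, β b * w b = -1 := by
      have h := hroww (Sum.inr e0)
      have h2 : ∑ b, Pr (Sum.inr e0) b * w b = ∑ b, (α b * w b - β b * w b) :=
        Finset.sum_congr rfl (fun b _ => by rw [hαβ b (Sum.inr e0), hwr]; ring)
      rw [h2, Finset.sum_sub_distrib, hwr] at h
      exact h
    constructor <;> linarith
  -- identify α and β
  have hα : ∀ b, α b = tildeπ b / (4 * m) := by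
    intro b
    have key : ∑ a, tildeπ a * (α b + β b * w a) = ∑ a, tildeπ b * (α a + β a * w b) :=
      Finset.sum_congr rfl (fun a _ => by rw [← hαβ b a, ← hαβ a b]; exact hPrsa a b)
    have hL : ∑ a, tildeπ a * (α b + β b * w a)
        = α b * (∑ a, tildeπ a) + β b * (∑ a, tildeπ a * w a) := by
      rw [Finset.mul_sum, Finset.mul_sum, ← Finset.sum_add_distrib]
      exact Finset.sum_congr rfl (fun a _ => by ring)
    have hR : ∑ a, tildeπ b * (α a + β a * w b)
        = tildeπ b * (∑ a, α a) + tildeπ b * w b * (∑ a, β a) := by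
      rw [Finset.mul_sum, Finset.mul_sum, ← Finset.sum_add_distrib]
      exact Finset.sum_congr rfl (fun a _ => by ring)
    rw [hL, hR, S1, S2, hSα.1, hSα.2] at key
    simp only [mul_zero, mul_one, add_zero, zero_mul] at key
    have hm4 : (4 : ℝ) * m ≠ 0 := by positivity
    rw [eq_div_iff hm4]
    linarith [key]
  have hβ : ∀ b, β b = tildeπ b * w b / (4 * m) := by
    intro b
    have key : ∑ a, w a * (tildeπ a * (α b + β b * w a))
        = ∑ a, w a * (tildeπ b * (α a + β a * w b)) :=
      Finset.sum_congr rfl (fun a _ => by rw [← hαβ b a, ← hαβ a b, hPrsa a b])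
    have hL : ∑ a, w a * (tildeπ a * (α b + β b * w a))
        = α b * (∑ a, tildeπ a * w a) + β b * (∑ a, tildeπ a) := by
      rw [Finset.mul_sum, Finset.mul_sum, ← Finset.sum_add_distrib]
      exact Finset.sum_congr rfl (fun a _ => by
        linear_combination (β b * tildeπ a) * hww a)
    have hR : ∑ a, w a * (tildeπ b * (α a + β a * w b))
        = tildeπ b * (∑ a, α a * w a) + tildeπ b * w b * (∑ a, β a * w a) := by
      rw [Finset.mul_sum, Finset.mul_sum, ← Finset.sum_add_distrib]
      exact Finset.sum_congr rfl (fun a _ => by ring)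
    rw [hL, hR, S1, S2, hSw.1, hSw.2] at key
    simp only [mul_zero, mul_one, add_zero, zero_mul, zero_add] at key
    have hm4 : (4 : ℝ) * m ≠ 0 := by positivity
    rw [eq_div_iff hm4]
    linarith [key]
  have hPrf : ∀ a b, Pr a b = tildeπ b * (1 + w a * w b) / (4 * m) := by
    intro a b
    rw [hαβ b a, hα b, hβ b]
    field_simp
  -- one step of the walk
  have hstep : ∀ (s : ℝ) (c), ∑ b, (tildeπ b * (1 + s * w b) / (4 * m)) * tQ b c
      = tildeπ c * (1 - s * w c) / (4 * m) := by
    intro s c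
    have h : ∀ b, (tildeπ b * (1 + s * w b) / (4 * m)) * tQ b c
        = (tildeπ c * tQ c b) * ((1 + s * w b) / (4 * m)) := by
      intro b
      rw [show (tildeπ b * (1 + s * w b) / (4 * m)) * tQ b c
          = (tildeπ b * tQ b c) * ((1 + s * w b) / (4 * m)) from by ring, hrev b c]
    rw [Finset.sum_congr rfl (fun b _ => h b)]
    have h2 : ∑ b, (tildeπ c * tQ c b) * ((1 + s * w b) / (4 * m))
        = (tildeπ c / (4 * m)) * ∑ b, tQ c b * (1 + s * w b) := by
      rw [Finset.mul_sum]
      exact Finset.sum_congr rfl (fun b _ => by ring)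
    rw [h2, D s c]
    ring
  have hPQ : ∀ a c, (Pr * tQ) a c = tildeπ c * (1 - w a * w c) / (4 * m) := by
    intro a c
    rw [Matrix.mul_apply]
    rw [Finset.sum_congr rfl (fun b _ => by rw [hPrf a b])]
    exact hstep (w a) c
  have hPQQ : Pr * tQ * tQ = Pr := by
    ext a c
    rw [Matrix.mul_apply]
    have h : ∀ b, (Pr * tQ) a b * tQ b c
        = (tildeπ b * (1 + (-(w a)) * w b) / (4 * m)) * tQ b c := by
      intro b; rw [hPQ a b]; ring_nf
    rw [Finset.sum_congr rfl (fun b _ => h b), hstep (-(w a)) c, hPrf a c]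
    ring
  have hind : ∀ k : ℕ, Pr * tQ ^ (2 * k) = Pr := by
    intro k
    induction k with
    | zero => simp
    | succ n ih =>
      have h2 : 2 * (n + 1) = 2 * n + 2 := by ring
      rw [h2, pow_add, ← mul_assoc, ih, pow_two, ← mul_assoc, hPQQ]
  intro k x y
  rw [hind k, hPrf, hπ, hwl, hwl]
  simp only [Sum.elim_inl]
  have h2 : ((2 * G.edgeFinset.card : ℕ) : ℝ) = 2 * m := by rw [hm_def]; push_cast; ring
  have hm0 : m ≠ 0 := ne_of_gt hm
  field_simp
  ring
end

section
/- Let $(Z_k(\tilde x))_{k\in\mathbb N,\tilde x\in V(\tilde G)}$ be independent centred Gaussian random variables with $\mathrm{Var}\,Z_k(\tilde x)=C_0/\tilde\pi(\tilde x)$, and set $\xi^k(x)=((\mathrm{Id}-\Pi)\tilde Q^k Z_k)(x)$ for $x\in V(G)$. Then for every $k$ and all $x,y\in V(G)$, $\mathrm{Cov}(\xi^k(x),\xi^k(y))=\frac{C_0}{\deg_G(y)}\big(\tilde Q^{2k}(x,y)-\pi_G(y)\big)$. -/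
set_option maxHeartbeats 1000000

open SimpleGraph Finset MeasureTheory ProbabilityTheory
open scoped Matrix

section Gauss
open Real Filter
open scoped NNReal ENNReal

lemma aux_integrable_sq_exp {b : ℝ} (hb : 0 < b) :
    Integrable (fun x : ℝ => x ^ 2 * Real.exp (-b * x ^ 2)) := by
  have hbound : ∀ x : ℝ, ‖x ^ 2 * Real.exp (-b * x ^ 2)‖
      ≤ (2 / b) * Real.exp (-(b / 2) * x ^ 2) := by
    intro x
    have h1 : (b / 2) * x ^ 2 ≤ Real.exp ((b / 2) * x ^ 2) := by
      have := Real.add_one_le_exp ((b / 2) * x ^ 2); linarith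
    have hx2 : x ^ 2 ≤ (2 / b) * Real.exp ((b / 2) * x ^ 2) := by
      rw [div_mul_eq_mul_div, le_div_iff₀ hb]; nlinarith
    have hnn : (0:ℝ) ≤ x ^ 2 * Real.exp (-b * x ^ 2) := by positivity
    rw [Real.norm_of_nonneg hnn]
    calc x ^ 2 * Real.exp (-b * x ^ 2)
        ≤ ((2 / b) * Real.exp ((b / 2) * x ^ 2)) * Real.exp (-b * x ^ 2) :=
          mul_le_mul_of_nonneg_right hx2 (Real.exp_pos _).le
      _ = (2 / b) * Real.exp (-(b / 2) * x ^ 2) := by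
          rw [mul_assoc, ← Real.exp_add]
          congr 2; ring
  refine Integrable.mono' ((integrable_exp_neg_mul_sq (by positivity : (0:ℝ) < b / 2)).const_mul (2 / b)) ?_ (ae_of_all _ hbound)
  exact (Continuous.mul (by continuity) (by continuity)).aestronglyMeasurable

lemma aux_integral_sq_exp {b : ℝ} (hb : 0 < b) :
    ∫ x : ℝ, x ^ 2 * Real.exp (-b * x ^ 2) = Real.sqrt (π / b) / (2 * b) := by
  have hderiv : ∀ x : ℝ, HasDerivAt (fun y : ℝ => y * Real.exp (-b * y ^ 2))
      (Real.exp (-b * x ^ 2) - 2 * b * (x ^ 2 * Real.exp (-b * x ^ 2))) x := by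
    intro x
    have he : HasDerivAt (fun y : ℝ => Real.exp (-b * y ^ 2))
        (Real.exp (-b * x ^ 2) * (-b * (2 * x ^ 1))) x :=
      ((hasDerivAt_pow 2 x).const_mul (-b)).exp
    have : HasDerivAt (fun y : ℝ => y * Real.exp (-b * y ^ 2))
        (1 * Real.exp (-b * x ^ 2) + x * (Real.exp (-b * x ^ 2) * (-b * (2 * x ^ 1)))) x :=
      (hasDerivAt_id' (x := x)).mul he
    convert this using 1
    ring
  have h0 := integral_eq_zero_of_hasDerivAt_of_integrable hderiv
    ((integrable_exp_neg_mul_sq hb).sub ((aux_integrable_sq_exp hb).const_mul (2 * b)))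
    (integrable_mul_exp_neg_mul_sq hb)
  rw [integral_sub (integrable_exp_neg_mul_sq hb) ((aux_integrable_sq_exp hb).const_mul (2 * b)),
    integral_const_mul, integral_gaussian, sub_eq_zero] at h0
  rw [eq_div_iff (by positivity : 2 * b ≠ 0), h0]
  ring

lemma aux_gaussianPDF_eq (v : ℝ≥0) :
    gaussianPDF 0 v = fun x => ((Real.toNNReal (gaussianPDFReal 0 v x) : ℝ≥0) : ℝ≥0∞) := by
  funext x; rw [gaussianPDF_def]; rfl

lemma aux_pdf_formula {v : ℝ≥0} (x : ℝ) :
    gaussianPDFReal 0 v x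
      = (Real.sqrt (2 * π * v))⁻¹ * Real.exp (-(2 * (v:ℝ))⁻¹ * x ^ 2) := by
  rw [gaussianPDFReal]
  congr 1
  congr 1
  ring

lemma aux_integral_gaussianReal {v : ℝ≥0} (hv : v ≠ 0) (g : ℝ → ℝ) :
    ∫ x, g x ∂(gaussianReal 0 v)
      = ∫ x, gaussianPDFReal 0 v x * g x := by
  rw [gaussianReal_of_var_ne_zero _ hv, aux_gaussianPDF_eq,
    integral_withDensity_eq_integral_smul
      ((measurable_gaussianPDFReal 0 v).real_toNNReal) g]
  congr 1
  funext x
  rw [NNReal.smul_def, Real.coe_toNNReal _ (gaussianPDFReal_nonneg 0 v x), smul_eq_mul]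

lemma aux_moment1 {v : ℝ≥0} (hv : v ≠ 0) :
    ∫ x, x ∂(gaussianReal 0 v) = 0 := by
  rw [aux_integral_gaussianReal hv]
  set g : ℝ → ℝ := fun x => gaussianPDFReal 0 v x * x with hg
  have hodd : ∀ x, g (-x) = - g x := by
    intro x
    simp only [hg, gaussianPDFReal]
    ring_nf
  have hcomp : ∫ x, g (-x) = ∫ x, g x :=
    (Measure.measurePreserving_neg (volume : Measure ℝ)).integral_comp
      (MeasurableEquiv.neg ℝ).measurableEmbedding g
  have : ∫ x, g x = - ∫ x, g x := by
    rw [← integral_neg]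
    rw [← hcomp]
    congr 1
    funext x
    rw [hodd]
  linarith [this]

lemma aux_moment2 {v : ℝ≥0} (hv : v ≠ 0) :
    ∫ x, x ^ 2 ∂(gaussianReal 0 v) = (v : ℝ) := by
  have hvpos : (0:ℝ) < (v : ℝ) := by positivity
  have hb : (0:ℝ) < (2 * (v:ℝ))⁻¹ := by positivity
  rw [aux_integral_gaussianReal hv]
  have : ∀ x : ℝ, gaussianPDFReal 0 v x * x ^ 2
      = (Real.sqrt (2 * π * v))⁻¹ * (x ^ 2 * Real.exp (-(2 * (v:ℝ))⁻¹ * x ^ 2)) := by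
    intro x; rw [aux_pdf_formula]; ring
  simp only [this]
  rw [integral_const_mul, aux_integral_sq_exp hb]
  have h1 : π / (2 * (v:ℝ))⁻¹ = 2 * π * v := by field_simp
  have h2 : 2 * (2 * (v:ℝ))⁻¹ = (v:ℝ)⁻¹ := by field_simp
  rw [h1, h2]
  have hs : Real.sqrt (2 * π * v) ≠ 0 := by
    refine (Real.sqrt_pos.mpr ?_).ne'
    positivity
  field_simp

lemma aux_memLp {v : ℝ≥0} (hv : v ≠ 0) :
    MemLp (fun x : ℝ => x) 2 (gaussianReal 0 v) := by
  have hb : (0:ℝ) < (2 * (v:ℝ))⁻¹ := by positivity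
  rw [memLp_two_iff_integrable_sq measurable_id'.aestronglyMeasurable]
  rw [gaussianReal_of_var_ne_zero _ hv, aux_gaussianPDF_eq,
    integrable_withDensity_iff_integrable_smul
      ((measurable_gaussianPDFReal 0 v).real_toNNReal)]
  have : ∀ x : ℝ, (Real.toNNReal (gaussianPDFReal 0 v x)) • (x ^ 2)
      = (Real.sqrt (2 * π * v))⁻¹ * (x ^ 2 * Real.exp (-(2 * (v:ℝ))⁻¹ * x ^ 2)) := by
    intro x
    rw [NNReal.smul_def, Real.coe_toNNReal _ (gaussianPDFReal_nonneg 0 v x), smul_eq_mul,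
      aux_pdf_formula]
    ring
  simp only [this]
  exact (aux_integrable_sq_exp hb).const_mul _

end Gauss

open scoped Classical in
/-- Let `(Z_k(x̃))` be independent centred Gaussians with variance
`C₀/π̃(x̃)` on the subdivision graph `G̃` of a finite connected graph `G`,
and let `ξ^k(x) = ((Id - Π) Q̃^k Z_k)(x)` for `x ∈ V(G)`.  Then for every `k`
and all `x, y ∈ V(G)`,
`Cov(ξ^k(x), ξ^k(y)) = (C₀/deg_G(y)) (Q̃^{2k}(x,y) - π_G(y))`. -/
theorem cov_xi_eq {V : Type*} [Fintype V] [DecidableEq V]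
    (G : SimpleGraph V) [DecidableRel G.Adj] (hG : G.Connected) [Nontrivial V]
    (tildeπ : V ⊕ G.edgeSet → ℝ)
    (hπ : ∀ a, tildeπ a = Sum.elim (fun x => (G.degree x : ℝ)) (fun _ => 2) a)
    (w : V ⊕ G.edgeSet → ℝ)
    (hw : ∀ a, w a = Sum.elim (fun _ => (1 : ℝ)) (fun _ => -1) a)
    (tQ : Matrix (V ⊕ G.edgeSet) (V ⊕ G.edgeSet) ℝ)
    (htQ : ∀ a b, tQ a b = if (subdivisionGraph G).Adj a b then 1 / tildeπ a else 0)
    (Pr : Matrix (V ⊕ G.edgeSet) (V ⊕ G.edgeSet) ℝ)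
    (hPr2 : Pr * Pr = Pr)
    (hPrsa : ∀ a b, tildeπ a * Pr a b = tildeπ b * Pr b a)
    (hrange : LinearMap.range Pr.mulVecLin
      = Submodule.span ℝ {(fun _ => (1 : ℝ)), w})
    {Ω : Type*} [MeasurableSpace Ω] (P : Measure Ω) [IsProbabilityMeasure P]
    (C0 : ℝ) (hC0 : 0 < C0)
    (v : ℕ → (V ⊕ G.edgeSet) → NNReal)
    (hv : ∀ k a, (v k a : ℝ) = C0 / tildeπ a)
    (Z : ℕ → (V ⊕ G.edgeSet) → Ω → ℝ)
    (hZmeas : ∀ k a, Measurable (Z k a))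
    (hZindep : iIndepFun
      (fun p : ℕ × (V ⊕ G.edgeSet) => Z p.1 p.2) P)
    (hZgauss : ∀ k a, Measure.map (Z k a) P = gaussianReal 0 (v k a))
    (ξ : ℕ → V → Ω → ℝ)
    (hξ : ∀ k x ω, ξ k x ω
      = ∑ a : V ⊕ G.edgeSet, ((1 - Pr) * tQ ^ k) (Sum.inl x) a * Z k a ω) :
    ∀ (k : ℕ) (x y : V),
      (∫ ω, ξ k x ω * ξ k y ω ∂P)
        - (∫ ω, ξ k x ω ∂P) * (∫ ω, ξ k y ω ∂P)
      = (C0 / (G.degree y : ℝ))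
          * ((tQ ^ (2 * k)) (Sum.inl x) (Sum.inl y)
              - (G.degree y : ℝ) / (2 * G.edgeFinset.card)) := by
  intro k x y
  -- basic positivity
  have hdeg : ∀ z : V, 0 < G.degree z := by
    intro z
    rw [degree_pos_iff_exists_adj]
    obtain ⟨u, hu⟩ := exists_ne z
    obtain ⟨p⟩ := hG.preconnected z u
    cases p with
    | nil => exact absurd rfl hu
    | cons h q => exact ⟨_, h⟩
  have hπpos : ∀ a, 0 < tildeπ a := by
    rintro (z | e)
    · rw [hπ]; simp only [Sum.elim_inl]; exact_mod_cast hdeg z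
    · rw [hπ]; norm_num
  have hπne : ∀ a, tildeπ a ≠ 0 := fun a => (hπpos a).ne'
  set E : ℝ := (G.edgeFinset.card : ℝ) with hE
  have hEpos : 0 < E := by
    obtain ⟨z0, u0, h0⟩ : ∃ z u, G.Adj z u := by
      have h := hdeg (Classical.arbitrary V)
      rw [degree_pos_iff_exists_adj] at h
      obtain ⟨u, hu⟩ := h
      exact ⟨_, u, hu⟩
    have : 0 < G.edgeFinset.card :=
      Finset.card_pos.mpr ⟨s(z0, u0), mem_edgeFinset.mpr h0⟩
    rw [hE]
    exact_mod_cast this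
  have hEne : E ≠ 0 := hEpos.ne'
  have hcardE : (Fintype.card G.edgeSet : ℝ) = E := by
    rw [hE, G.edgeFinset_card]
  -- sums of weights
  have hSdeg : ∑ z : V, (G.degree z : ℝ) = 2 * E := by
    rw [hE]
    exact_mod_cast congrArg (Nat.cast : ℕ → ℝ) G.sum_degrees_eq_twice_card_edges
  have hπ1 : ∀ z : V, tildeπ (Sum.inl z) = (G.degree z : ℝ) := fun z => by rw [hπ]; rfl
  have hπ2 : ∀ e, tildeπ (Sum.inr e) = 2 := fun e => by rw [hπ]; rfl
  have hw1 : ∀ z : V, w (Sum.inl z) = 1 := fun z => by rw [hw]; rfl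
  have hw2 : ∀ e, w (Sum.inr e) = -1 := fun e => by rw [hw]; rfl
  have hSpi : ∑ a, tildeπ a = 4 * E := by
    rw [Fintype.sum_sum_type]
    simp only [hπ1, hπ2]
    rw [hSdeg, Finset.sum_const, Finset.card_univ, nsmul_eq_mul, hcardE]
    ring
  have hSpiw : ∑ a, tildeπ a * w a = 0 := by
    rw [Fintype.sum_sum_type]
    simp only [hπ1, hπ2, hw1, hw2, mul_one, mul_neg_one]
    rw [hSdeg, Finset.sum_const, Finset.card_univ, nsmul_eq_mul, hcardE]
    ring
  have hSpiw2 : ∑ a, tildeπ a * w a * w a = 4 * E := by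
    rw [Fintype.sum_sum_type]
    simp only [hπ1, hπ2, hw1, hw2, mul_one, mul_neg_one, neg_neg]
    rw [hSdeg, Finset.sum_const, Finset.card_univ, nsmul_eq_mul, hcardE]
    ring
  -- transition matrix facts
  have hrev : ∀ a b, tildeπ a * tQ a b = tildeπ b * tQ b a := by
    intro a b
    by_cases hab : (subdivisionGraph G).Adj a b
    · rw [htQ a b, htQ b a, if_pos hab, if_pos hab.symm,
        mul_one_div, div_self (hπne a), mul_one_div, div_self (hπne b)]
    · rw [htQ a b, htQ b a, if_neg hab, if_neg (fun h => hab h.symm), mul_zero, mul_zero]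
  have hrow : ∀ a, ∑ b, tQ a b = 1 := by
    rintro (z | e)
    · rw [Fintype.sum_sum_type]
      have h0 : ∀ u : V, tQ (Sum.inl z) (Sum.inl u) = 0 := by
        intro u; rw [htQ]; simp [subdivisionGraph]
      have h1 : ∀ e : G.edgeSet, tQ (Sum.inl z) (Sum.inr e)
          = if z ∈ (e : Sym2 V) then ((G.degree z : ℝ))⁻¹ else 0 := by
        intro e
        rw [htQ]
        by_cases hz : z ∈ (e : Sym2 V)
        · rw [if_pos hz, if_pos (show (subdivisionGraph G).Adj (Sum.inl z) (Sum.inr e) from hz),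
            hπ1, one_div]
        · rw [if_neg hz, if_neg (show ¬ (subdivisionGraph G).Adj (Sum.inl z) (Sum.inr e) from hz)]
      simp only [h0, h1, Finset.sum_const_zero, zero_add]
      rw [← Finset.sum_subtype G.edgeFinset (fun e => mem_edgeFinset)
        (fun e => if z ∈ e then ((G.degree z : ℝ))⁻¹ else 0)]
      rw [← Finset.sum_filter, ← incidenceFinset_eq_filter, Finset.sum_const,
        card_incidenceFinset_eq_degree, nsmul_eq_mul]
      exact mul_inv_cancel₀ (by exact_mod_cast (hdeg z).ne')
    · rw [Fintype.sum_sum_type]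
      have h0 : ∀ f : G.edgeSet, tQ (Sum.inr e) (Sum.inr f) = 0 := by
        intro f; rw [htQ]; simp [subdivisionGraph]
      have h1 : ∀ u : V, tQ (Sum.inr e) (Sum.inl u)
          = if u ∈ (e : Sym2 V) then (2 : ℝ)⁻¹ else 0 := by
        intro u
        rw [htQ]
        by_cases hu : u ∈ (e : Sym2 V)
        · rw [if_pos hu, if_pos (show (subdivisionGraph G).Adj (Sum.inr e) (Sum.inl u) from hu),
            hπ2, one_div]
        · rw [if_neg hu, if_neg (show ¬ (subdivisionGraph G).Adj (Sum.inr e) (Sum.inl u) from hu)]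
      simp only [h0, h1, Finset.sum_const_zero, add_zero]
      obtain ⟨s, hs⟩ := e
      revert hs
      refine Sym2.ind (fun u1 u2 => ?_) s
      intro hs
      have hne : u1 ≠ u2 := (G.mem_edgeSet.mp hs).ne
      have hsplit : ∀ u : V, (if u ∈ ((⟨s(u1, u2), hs⟩ : G.edgeSet) : Sym2 V) then (2:ℝ)⁻¹ else 0)
          = (if u = u1 then (2:ℝ)⁻¹ else 0) + (if u = u2 then (2:ℝ)⁻¹ else 0) := by
        intro u
        by_cases h1 : u = u1 <;> by_cases h2 : u = u2 <;>
          simp_all [Sym2.mem_iff]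
      simp only [hsplit]
      rw [Finset.sum_add_distrib, Finset.sum_ite_eq' Finset.univ u1 (fun _ => (2:ℝ)⁻¹),
        Finset.sum_ite_eq' Finset.univ u2 (fun _ => (2:ℝ)⁻¹)]
      norm_num
  have hQw : ∀ a, ∑ b, tQ a b * w b = - w a := by
    intro a
    have hterm : ∀ b, tQ a b * w b = tQ a b * (- w a) := by
      intro b
      by_cases hab : (subdivisionGraph G).Adj a b
      · congr 1
        rcases a with z | e <;> rcases b with u | f
        · exact absurd hab (by simp [subdivisionGraph])
        · simp [hw1, hw2]
        · simp [hw1, hw2]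
        · exact absurd hab (by simp [subdivisionGraph])
      · rw [htQ, if_neg hab, zero_mul, zero_mul]
    rw [Finset.sum_congr rfl (fun b _ => hterm b), ← Finset.sum_mul, hrow, one_mul]
  -- explicit projection
  have hfix : ∀ u : (V ⊕ G.edgeSet) → ℝ, u ∈ LinearMap.range Pr.mulVecLin
      → Pr.mulVec u = u := by
    rintro u ⟨t, rfl⟩
    rw [Matrix.mulVecLin_apply, Matrix.mulVec_mulVec, hPr2]
  have hPr1 : Pr.mulVec (fun _ => (1:ℝ)) = fun _ => (1:ℝ) :=
    hfix _ (by rw [hrange]; exact Submodule.subset_span (Set.mem_insert _ _))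
  have hPrw : Pr.mulVec w = w :=
    hfix _ (by rw [hrange]; exact Submodule.subset_span (Set.mem_insert_of_mem _ rfl))
  have hrowPr : ∀ b, ∑ i, Pr b i = 1 := by
    intro b
    have := congrFun hPr1 b
    simpa [Matrix.mulVec, dotProduct] using this
  have hrowPrw : ∀ b, ∑ i, Pr b i * w i = w b := by
    intro b
    have := congrFun hPrw b
    simpa [Matrix.mulVec, dotProduct] using this
  have hPrE : ∀ a b, Pr a b = tildeπ b * (1 + w a * w b) / (4 * E) := by
    intro a b
    have hcol : (fun i => Pr i b) ∈ LinearMap.range Pr.mulVecLin := by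
      refine ⟨Pi.single b 1, ?_⟩
      rw [Matrix.mulVecLin_apply, Matrix.mulVec_single]
      funext i; simp
    rw [hrange, Submodule.mem_span_pair] at hcol
    obtain ⟨c, d, hcd⟩ := hcol
    have hcd' : ∀ i, Pr i b = c + d * w i := by
      intro i
      have := congrFun hcd i
      simpa [Pi.smul_apply, smul_eq_mul] using this.symm
    have e1 : ∑ i, tildeπ i * Pr i b = c * (4 * E) := by
      calc ∑ i, tildeπ i * Pr i b = ∑ i, (c * tildeπ i + d * (tildeπ i * w i)) :=
            Finset.sum_congr rfl fun i _ => by rw [hcd' i]; ring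
        _ = c * ∑ i, tildeπ i + d * ∑ i, tildeπ i * w i := by
            rw [Finset.sum_add_distrib, Finset.mul_sum, Finset.mul_sum]
        _ = c * (4 * E) := by rw [hSpi, hSpiw]; ring
    have e2 : ∑ i, tildeπ i * Pr i b = tildeπ b := by
      calc ∑ i, tildeπ i * Pr i b = ∑ i, tildeπ b * Pr b i :=
            Finset.sum_congr rfl fun i _ => hPrsa i b
        _ = tildeπ b * ∑ i, Pr b i := (Finset.mul_sum _ _ _).symm
        _ = tildeπ b := by rw [hrowPr b, mul_one]
    have e3 : ∑ i, tildeπ i * w i * Pr i b = d * (4 * E) := by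
      calc ∑ i, tildeπ i * w i * Pr i b
          = ∑ i, (c * (tildeπ i * w i) + d * (tildeπ i * w i * w i)) :=
            Finset.sum_congr rfl fun i _ => by rw [hcd' i]; ring
        _ = c * ∑ i, tildeπ i * w i + d * ∑ i, tildeπ i * w i * w i := by
            rw [Finset.sum_add_distrib, Finset.mul_sum, Finset.mul_sum]
        _ = d * (4 * E) := by rw [hSpiw, hSpiw2]; ring
    have e4 : ∑ i, tildeπ i * w i * Pr i b = tildeπ b * w b := by
      calc ∑ i, tildeπ i * w i * Pr i b = ∑ i, w i * (tildeπ i * Pr i b) :=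
            Finset.sum_congr rfl fun i _ => by ring
        _ = ∑ i, w i * (tildeπ b * Pr b i) :=
            Finset.sum_congr rfl fun i _ => by rw [hPrsa i b]
        _ = tildeπ b * ∑ i, Pr b i * w i := by
            rw [Finset.mul_sum]
            exact Finset.sum_congr rfl fun i _ => by ring
        _ = tildeπ b * w b := by rw [hrowPrw b]
    have hc : c * (4 * E) = tildeπ b := by rw [← e1, e2]
    have hd : d * (4 * E) = tildeπ b * w b := by rw [← e3, e4]
    rw [eq_div_iff (mul_ne_zero four_ne_zero hEne)]
    calc Pr a b * (4 * E) = (c + d * w a) * (4 * E) := by rw [hcd' a]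
      _ = c * (4 * E) + (d * (4 * E)) * w a := by ring
      _ = tildeπ b * (1 + w a * w b) := by rw [hc, hd]; ring
  -- matrix identities
  set Dinv : Matrix (V ⊕ G.edgeSet) (V ⊕ G.edgeSet) ℝ :=
    Matrix.diagonal (fun a => (tildeπ a)⁻¹) with hDinv
  have hQD1 : tQ * Dinv = Dinv * tQᵀ := by
    rw [hDinv]
    ext a b
    rw [Matrix.mul_diagonal, Matrix.diagonal_mul, Matrix.transpose_apply,
      mul_comm ((tildeπ a)⁻¹), ← div_eq_mul_inv, ← div_eq_mul_inv,
      div_eq_div_iff (hπne b) (hπne a)]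
    linear_combination hrev a b
  have hQD : ∀ m : ℕ, tQ ^ m * Dinv = Dinv * (tQ ^ m)ᵀ := by
    intro m
    induction m with
    | zero => simp
    | succ n ih =>
      calc tQ ^ (n + 1) * Dinv = tQ ^ n * (tQ * Dinv) := by
            rw [pow_succ, Matrix.mul_assoc]
        _ = tQ ^ n * (Dinv * tQᵀ) := by rw [hQD1]
        _ = (tQ ^ n * Dinv) * tQᵀ := by rw [Matrix.mul_assoc]
        _ = Dinv * (tQ ^ n)ᵀ * tQᵀ := by rw [ih]
        _ = Dinv * ((tQ ^ n)ᵀ * tQᵀ) := by rw [Matrix.mul_assoc]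
        _ = Dinv * (tQ ^ (n + 1))ᵀ := by rw [← Matrix.transpose_mul, ← pow_succ']
  have hPrD : Pr * Dinv = Dinv * Prᵀ := by
    rw [hDinv]
    ext a b
    rw [Matrix.mul_diagonal, Matrix.diagonal_mul, Matrix.transpose_apply,
      mul_comm ((tildeπ a)⁻¹), ← div_eq_mul_inv, ← div_eq_mul_inv,
      div_eq_div_iff (hπne b) (hπne a)]
    linear_combination hPrsa a b
  have hQPr1 : ∀ a b, (tQ * Pr) a b = tildeπ b * (1 - w a * w b) / (4 * E) := by
    intro a b
    rw [Matrix.mul_apply]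
    calc ∑ c, tQ a c * Pr c b
        = ∑ c, (tildeπ b / (4 * E) * tQ a c + tildeπ b * w b / (4 * E) * (tQ a c * w c)) :=
          Finset.sum_congr rfl fun c _ => by rw [hPrE c b]; ring
      _ = tildeπ b / (4 * E) * ∑ c, tQ a c
          + tildeπ b * w b / (4 * E) * ∑ c, tQ a c * w c := by
          rw [Finset.sum_add_distrib, Finset.mul_sum, Finset.mul_sum]
      _ = tildeπ b * (1 - w a * w b) / (4 * E) := by rw [hrow a, hQw a]; ring
  have hQPr : tQ * (tQ * Pr) = Pr := by
    ext a b
    rw [Matrix.mul_apply]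
    calc ∑ c, tQ a c * (tQ * Pr) c b
        = ∑ c, (tildeπ b / (4 * E) * tQ a c - tildeπ b * w b / (4 * E) * (tQ a c * w c)) :=
          Finset.sum_congr rfl fun c _ => by rw [hQPr1 c b]; ring
      _ = tildeπ b / (4 * E) * ∑ c, tQ a c
          - tildeπ b * w b / (4 * E) * ∑ c, tQ a c * w c := by
          rw [Finset.sum_sub_distrib, Finset.mul_sum, Finset.mul_sum]
      _ = Pr a b := by rw [hrow a, hQw a, hPrE a b]; ring
  have hPrQ1 : ∀ a b, (Pr * tQ) a b = tildeπ b * (1 - w a * w b) / (4 * E) := by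
    intro a b
    rw [Matrix.mul_apply]
    calc ∑ c, Pr a c * tQ c b
        = ∑ c, (tildeπ b / (4 * E) * tQ b c + tildeπ b * w a / (4 * E) * (tQ b c * w c)) :=
          Finset.sum_congr rfl fun c _ => by
            linear_combination ((1 + w a * w c) / (4 * E)) * (hrev c b)
              + (tQ c b) * (hPrE a c)
      _ = tildeπ b / (4 * E) * ∑ c, tQ b c
          + tildeπ b * w a / (4 * E) * ∑ c, tQ b c * w c := by
          rw [Finset.sum_add_distrib, Finset.mul_sum, Finset.mul_sum]
      _ = tildeπ b * (1 - w a * w b) / (4 * E) := by rw [hrow b, hQw b]; ring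
  have hPrQ : Pr * tQ * tQ = Pr := by
    ext a b
    rw [Matrix.mul_apply]
    calc ∑ c, (Pr * tQ) a c * tQ c b
        = ∑ c, (tildeπ b / (4 * E) * tQ b c - tildeπ b * w a / (4 * E) * (tQ b c * w c)) :=
          Finset.sum_congr rfl fun c _ => by
            have h1 := hPrQ1 a c
            linear_combination ((1 - w a * w c) / (4 * E)) * (hrev c b)
              + (tQ c b) * h1
      _ = tildeπ b / (4 * E) * ∑ c, tQ b c
          - tildeπ b * w a / (4 * E) * ∑ c, tQ b c * w c := by
          rw [Finset.sum_sub_distrib, Finset.mul_sum, Finset.mul_sum]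
      _ = Pr a b := by rw [hrow b, hQw b, hPrE a b]; ring
  have h2kPr : ∀ m : ℕ, tQ ^ (2 * m) * Pr = Pr := by
    intro m
    induction m with
    | zero => simp
    | succ n ih =>
      have h2 : 2 * (n + 1) = 2 * n + 2 := by ring
      have hsq : tQ ^ 2 * Pr = Pr := by rw [pow_two, Matrix.mul_assoc]; exact hQPr
      rw [h2, pow_add, Matrix.mul_assoc, hsq, ih]
  have hPr2k : ∀ m : ℕ, Pr * tQ ^ (2 * m) = Pr := by
    intro m
    induction m with
    | zero => simp
    | succ n ih =>
      have h2 : 2 * (n + 1) = 2 * n + 2 := by ring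
      rw [h2, pow_add, ← Matrix.mul_assoc, ih, pow_two, ← Matrix.mul_assoc, hPrQ]
  set M : Matrix (V ⊕ G.edgeSet) (V ⊕ G.edgeSet) ℝ := (1 - Pr) * tQ ^ k with hM
  have hkey : M * Dinv * Mᵀ = (tQ ^ (2 * k) - Pr) * Dinv := by
    have hA : (1 - Pr) * Dinv = Dinv * (1 - Pr)ᵀ := by
      rw [Matrix.transpose_sub, Matrix.transpose_one, Matrix.sub_mul, Matrix.mul_sub,
        Matrix.one_mul, Matrix.mul_one, hPrD]
    have hQ2k : tQ ^ k * tQ ^ k = tQ ^ (2 * k) := by rw [← pow_add, two_mul]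
    have s1 : (1 - Pr) * tQ ^ (2 * k) = tQ ^ (2 * k) - Pr := by
      rw [Matrix.sub_mul, Matrix.one_mul, hPr2k k]
    have hmid : (1 - Pr) * tQ ^ (2 * k) * (1 - Pr) = tQ ^ (2 * k) - Pr := by
      rw [s1, Matrix.sub_mul, Matrix.mul_sub, Matrix.mul_sub, Matrix.mul_one, Matrix.mul_one,
        h2kPr k, hPr2]
      abel
    have hMT : Mᵀ = (tQ ^ k)ᵀ * (1 - Pr)ᵀ := by rw [hM, Matrix.transpose_mul]
    calc M * Dinv * Mᵀ
        = (1 - Pr) * (tQ ^ k * (Dinv * ((tQ ^ k)ᵀ * (1 - Pr)ᵀ))) := by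
          rw [hMT, hM]; simp only [Matrix.mul_assoc]
      _ = (1 - Pr) * (tQ ^ k * ((Dinv * (tQ ^ k)ᵀ) * (1 - Pr)ᵀ)) := by
          simp only [Matrix.mul_assoc]
      _ = (1 - Pr) * (tQ ^ k * ((tQ ^ k * Dinv) * (1 - Pr)ᵀ)) := by rw [← hQD k]
      _ = ((1 - Pr) * (tQ ^ k * tQ ^ k)) * (Dinv * (1 - Pr)ᵀ) := by
          simp only [Matrix.mul_assoc]
      _ = ((1 - Pr) * tQ ^ (2 * k)) * ((1 - Pr) * Dinv) := by rw [hQ2k, ← hA]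
      _ = ((1 - Pr) * tQ ^ (2 * k) * (1 - Pr)) * Dinv := by
          simp only [Matrix.mul_assoc]
      _ = (tQ ^ (2 * k) - Pr) * Dinv := by rw [hmid]
  -- probability
  have hvne : ∀ a, v k a ≠ 0 := by
    intro a h
    have h2 := hv k a
    rw [h, NNReal.coe_zero] at h2
    have h3 := div_pos hC0 (hπpos a)
    linarith
  have hMem : ∀ a, MemLp (Z k a) 2 P := by
    intro a
    have h1 : MemLp (fun t : ℝ => t) 2 (Measure.map (Z k a) P) := by
      rw [hZgauss k a]; exact aux_memLp (hvne a)
    have := (memLp_map_measure_iff measurable_id'.aestronglyMeasurable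
      (hZmeas k a).aemeasurable).mp h1
    exact this
  have hInt : ∀ a, Integrable (Z k a) P := fun a => (hMem a).integrable one_le_two
  have hmean : ∀ a, ∫ ω, Z k a ω ∂P = 0 := by
    intro a
    have h1 : ∫ ω, Z k a ω ∂P = ∫ t, t ∂(Measure.map (Z k a) P) :=
      (integral_map (hZmeas k a).aemeasurable measurable_id'.aestronglyMeasurable).symm
    rw [h1, hZgauss k a, aux_moment1 (hvne a)]
  have hsq : ∀ a, ∫ ω, Z k a ω * Z k a ω ∂P = C0 / tildeπ a := by
    intro a
    have h1 : ∫ ω, Z k a ω * Z k a ω ∂P = ∫ ω, (Z k a ω) ^ 2 ∂P := by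
      congr 1; funext ω; ring
    have h2 : ∫ ω, (Z k a ω) ^ 2 ∂P = ∫ t, t ^ 2 ∂(Measure.map (Z k a) P) :=
      (integral_map (hZmeas k a).aemeasurable
        (measurable_id'.pow_const 2).aestronglyMeasurable).symm
    rw [h1, h2, hZgauss k a, aux_moment2 (hvne a), hv k a]
  have hintmul : ∀ a b, Integrable (fun ω => Z k a ω * Z k b ω) P := by
    intro a b
    have h1 : Integrable (fun ω => (Z k a ω + Z k b ω) ^ 2) P := by
      have := ((hMem a).add (hMem b)).integrable_sq
      simpa using this
    have h2 := (hMem a).integrable_sq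
    have h3 := (hMem b).integrable_sq
    have h4 := ((h1.sub h2).sub h3).const_mul (1/2 : ℝ)
    have h5 : (fun ω => (1/2 : ℝ) * ((Z k a ω + Z k b ω) ^ 2 - (Z k a ω) ^ 2 - (Z k b ω) ^ 2))
        = fun ω => Z k a ω * Z k b ω := by
      funext ω; ring
    rw [← h5]
    exact h4
  have hcross : ∀ a b, a ≠ b → ∫ ω, Z k a ω * Z k b ω ∂P = 0 := by
    intro a b hab
    have hind : IndepFun (Z k a) (Z k b) P :=
      hZindep.indepFun (by simp [hab] : ((k, a) : ℕ × (V ⊕ G.edgeSet)) ≠ (k, b))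
    have h := hind.integral_mul_eq_mul_integral (hZmeas k a).aestronglyMeasurable
      (hZmeas k b).aestronglyMeasurable
    simpa [Pi.mul_apply, hmean a, hmean b] using h
  -- the covariance computation
  have hξmean : ∀ z : V, ∫ ω, ξ k z ω ∂P = 0 := by
    intro z
    simp only [hξ]
    rw [integral_finset_sum _ (fun a _ => (hInt a).const_mul _)]
    simp [integral_const_mul, hmean]
  have hcov : ∫ ω, ξ k x ω * ξ k y ω ∂P
      = ∑ a, M (Sum.inl x) a * M (Sum.inl y) a * (C0 / tildeπ a) := by
    simp only [hξ]
    rw [← hM]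
    have hpt : ∀ ω : Ω, (∑ a, M (Sum.inl x) a * Z k a ω) * (∑ a, M (Sum.inl y) a * Z k a ω)
        = ∑ a, ∑ b, (M (Sum.inl x) a * M (Sum.inl y) b) * (Z k a ω * Z k b ω) := by
      intro ω
      rw [Finset.sum_mul_sum]
      exact Finset.sum_congr rfl fun a _ => Finset.sum_congr rfl fun b _ => by ring
    simp only [hpt]
    rw [integral_finset_sum _
      (fun a _ => integrable_finset_sum _ (fun b _ => ((hintmul a b).const_mul _)))]
    have hinner : ∀ a, ∫ ω, ∑ b, (M (Sum.inl x) a * M (Sum.inl y) b) * (Z k a ω * Z k b ω) ∂P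
        = ∑ b, (M (Sum.inl x) a * M (Sum.inl y) b) * ∫ ω, Z k a ω * Z k b ω ∂P := by
      intro a
      rw [integral_finset_sum _ (fun b _ => (hintmul a b).const_mul _)]
      exact Finset.sum_congr rfl fun b _ => integral_const_mul _ _
    simp only [hinner]
    refine Finset.sum_congr rfl fun a _ => ?_
    rw [Finset.sum_eq_single a]
    · rw [hsq a]
    · intro b _ hb
      rw [hcross a b (Ne.symm hb), mul_zero]
    · intro ha
      exact absurd (Finset.mem_univ a) ha
  rw [hcov, hξmean x, hξmean y, mul_zero, sub_zero]
  -- from sum to matrix entry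
  have hsum : ∑ a, M (Sum.inl x) a * M (Sum.inl y) a * (C0 / tildeπ a)
      = C0 * ((M * Dinv * Mᵀ) (Sum.inl x) (Sum.inl y)) := by
    rw [Matrix.mul_apply, Finset.mul_sum]
    refine Finset.sum_congr rfl fun a _ => ?_
    rw [hDinv, Matrix.mul_diagonal, Matrix.transpose_apply, div_eq_mul_inv]
    ring
  rw [hsum, hkey]
  have hentry : ((tQ ^ (2 * k) - Pr) * Dinv) (Sum.inl x) (Sum.inl y)
      = ((tQ ^ (2 * k)) (Sum.inl x) (Sum.inl y) - Pr (Sum.inl x) (Sum.inl y))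
        * (tildeπ (Sum.inl y))⁻¹ := by
    rw [Matrix.mul_diagonal, Matrix.sub_apply]
  rw [hentry, hPrE]
  have hwx : w (Sum.inl x) = 1 := by rw [hw]; rfl
  have hwy : w (Sum.inl y) = 1 := by rw [hw]; rfl
  have hπy : tildeπ (Sum.inl y) = (G.degree y : ℝ) := by rw [hπ]; rfl
  rw [hwx, hwy, hπy]
  have hdy : (G.degree y : ℝ) ≠ 0 := by
    have := hdeg y; positivity
  field_simp
  ring
end
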